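/- Lie–Trotter product formula: for square complex matrices A and B, the limit as n → ∞ of (exp(A/n) · exp(B/n))^n equals exp(A + B). In particular, for a Hamiltonian H = H₁ + H₂ and real t, lim_{n→∞} (exp(-itH₁/(2n)) exp(-itH₂/(2n)))^n = exp(-it(H₁+H₂)/2). -/

import Mathlib

attribute [local instance] Matrix.linftyOpNormedAddCommGroup Matrix.linftyOpNormedRing
  Matrix.linftyOpNormedAlgebra

open Nat NormedSpace Filter
set_option maxHeartbeats 1600000

section Aux

variable {𝔸 : Type*} [NormedRing 𝔸] [NormedAlgebra ℂ 𝔸] [CompleteSpace 𝔸]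


variable {𝔸 : Type*} [NormedRing 𝔸] [NormedAlgebra ℂ 𝔸] [CompleteSpace 𝔸]

lemma aux_norm_pow_le (h1 : ‖(1:𝔸)‖ ≤ 1) (x : 𝔸) (n : ℕ) : ‖x ^ n‖ ≤ ‖x‖ ^ n := by
  cases n with
  | zero => simpa using h1
  | succ n => exact norm_pow_le' x n.succ_pos

lemma aux_norm_exp_le (h1 : ‖(1:𝔸)‖ ≤ 1) (x : 𝔸) : ‖exp x‖ ≤ Real.exp ‖x‖ := by
  rw [exp_eq_tsum ℂ]
  refine (norm_tsum_le_tsum_norm (norm_expSeries_summable' (𝕂 := ℂ) x)).trans ?_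
  have hsum : Summable fun k : ℕ => ‖x‖ ^ k / k.factorial := Real.summable_pow_div_factorial ‖x‖
  refine (Summable.tsum_le_tsum (fun k => ?_) (norm_expSeries_summable' (𝕂 := ℂ) x) hsum).trans ?_
  · rw [norm_smul, norm_inv, Complex.norm_natCast, div_eq_inv_mul]
    gcongr
    exact aux_norm_pow_le h1 x k
  · rw [Real.exp_eq_exp_ℝ, exp_eq_tsum_div]

lemma aux_exp_sub (x : 𝔸) :
    exp x - 1 - x = ∑' k : ℕ, ((k + 2).factorial : ℂ)⁻¹ • x ^ (k + 2) := by
  have hs := expSeries_summable' (𝕂 := ℂ) x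
  have h := Summable.sum_add_tsum_nat_add 2 hs
  rw [exp_eq_tsum ℂ]
  show (∑' n : ℕ, ((n.factorial : ℂ))⁻¹ • x ^ n) - 1 - x = _
  rw [← h]
  simp [Finset.sum_range_succ]
  abel

lemma aux_quad (h1 : ‖(1:𝔸)‖ ≤ 1) (x : 𝔸) :
    ‖exp x - 1 - x‖ ≤ ‖x‖ ^ 2 * Real.exp ‖x‖ := by
  rw [aux_exp_sub]
  have hnormsum : Summable fun k : ℕ => ‖((k + 2).factorial : ℂ)⁻¹ • x ^ (k + 2)‖ :=
    (summable_nat_add_iff 2).2 (norm_expSeries_summable' (𝕂 := ℂ) x)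
  have hmajsum : Summable fun k : ℕ => ‖x‖ ^ 2 * (‖x‖ ^ k / k.factorial) :=
    (Real.summable_pow_div_factorial ‖x‖).mul_left _
  refine (norm_tsum_le_tsum_norm hnormsum).trans ?_
  refine (Summable.tsum_le_tsum (fun k => ?_) hnormsum hmajsum).trans ?_
  · rw [norm_smul, norm_inv, Complex.norm_natCast]
    have h2 : ‖x ^ (k + 2)‖ ≤ ‖x‖ ^ 2 * ‖x‖ ^ k := by
      refine (aux_norm_pow_le h1 x _).trans ?_
      rw [← pow_add, add_comm]
    have h3 : (((k + 2).factorial : ℝ))⁻¹ ≤ ((k.factorial : ℝ))⁻¹ :=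
      inv_anti₀ (by exact_mod_cast k.factorial_pos)
        (by exact_mod_cast Nat.factorial_le (by omega))
    calc (((k + 2).factorial : ℝ))⁻¹ * ‖x ^ (k + 2)‖
        ≤ ((k.factorial : ℝ))⁻¹ * (‖x‖ ^ 2 * ‖x‖ ^ k) := by
          gcongr
      _ = ‖x‖ ^ 2 * (‖x‖ ^ k / k.factorial) := by ring
  · rw [tsum_mul_left, Real.exp_eq_exp_ℝ, exp_eq_tsum_div]

lemma aux_pow_sub_pow (h1 : ‖(1:𝔸)‖ ≤ 1) (x y : 𝔸) {M : ℝ} (hM : 0 ≤ M)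
    (hx : ‖x‖ ≤ M) (hy : ‖y‖ ≤ M) (n : ℕ) :
    ‖x ^ n - y ^ n‖ ≤ n * M ^ (n - 1) * ‖x - y‖ := by
  induction n with
  | zero => simp
  | succ n ih =>
    have hid : x ^ (n + 1) - y ^ (n + 1) = x ^ n * (x - y) + (x ^ n - y ^ n) * y := by
      noncomm_ring
    have hxn : ‖x ^ n‖ ≤ M ^ n := (aux_norm_pow_le h1 x n).trans (pow_le_pow_left₀ (norm_nonneg _) hx n)
    calc ‖x ^ (n + 1) - y ^ (n + 1)‖
        ≤ ‖x ^ n * (x - y)‖ + ‖(x ^ n - y ^ n) * y‖ := by rw [hid]; exact norm_add_le _ _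
      _ ≤ M ^ n * ‖x - y‖ + (n * M ^ (n - 1) * ‖x - y‖) * M := by
          gcongr
          · exact (norm_mul_le _ _).trans (by gcongr)
          · exact (norm_mul_le _ _).trans (by gcongr)
      _ ≤ (n + 1 : ℕ) * M ^ ((n + 1) - 1) * ‖x - y‖ := by
          rcases Nat.eq_zero_or_pos n with h | h
          · subst h; simp
          · have : M ^ (n - 1) * M = M ^ n := by
              rw [← pow_succ]; congr 1; omega
            have e : (n : ℝ) * M ^ (n - 1) * ‖x - y‖ * M = n * M ^ n * ‖x - y‖ := by
              rw [← this]; ring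
            push_cast
            rw [e]
            ring_nf
            linarith

lemma trotter_gen (h1 : ‖(1:𝔸)‖ ≤ 1) (A B : 𝔸) :
    Tendsto (fun n : ℕ => (exp ((n : ℂ)⁻¹ • A) * exp ((n : ℂ)⁻¹ • B)) ^ n)
      atTop (nhds (exp (A + B))) := by
  set a := ‖A‖ + ‖B‖ with ha
  have ha0 : 0 ≤ a := by positivity
  set E := Real.exp a with hE
  have hE0 : 0 < E := Real.exp_pos a
  set C := 1 + a * E + E * E + E + E with hC
  have hC0 : 0 ≤ C := by positivity
  set K := E * C * a ^ 2 with hK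
  have key : ∀ n : ℕ, 1 ≤ n →
      ‖(exp ((n : ℂ)⁻¹ • A) * exp ((n : ℂ)⁻¹ • B)) ^ n - exp (A + B)‖ ≤ K / n := by
    intro n hn
    have hn0 : (0 : ℝ) < n := by exact_mod_cast hn
    have hnc : (n : ℂ) ≠ 0 := by exact_mod_cast Nat.one_le_iff_ne_zero.mp hn
    set x := (n : ℂ)⁻¹ • A with hxdef
    set y := (n : ℂ)⁻¹ • B with hydef
    set z := (n : ℂ)⁻¹ • (A + B) with hzdef
    set ε := a / n with hε
    have hε0 : 0 ≤ ε := by positivity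
    have hεa : ε ≤ a := by
      rw [hε, div_le_iff₀ hn0]
      have h1n : (1:ℝ) ≤ n := by exact_mod_cast hn
      nlinarith
    have hnx : ‖x‖ = ‖A‖ / n := by
      rw [hxdef, norm_smul, norm_inv, Complex.norm_natCast, div_eq_inv_mul]
    have hny : ‖y‖ = ‖B‖ / n := by
      rw [hydef, norm_smul, norm_inv, Complex.norm_natCast, div_eq_inv_mul]
    have hnz : ‖z‖ ≤ ε := by
      rw [hzdef, norm_smul, norm_inv, Complex.norm_natCast, hε, div_eq_inv_mul]
      gcongr
      exact norm_add_le _ _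
    have hx : ‖x‖ ≤ ε := by rw [hnx, hε]; gcongr; linarith [norm_nonneg B]
    have hy : ‖y‖ ≤ ε := by rw [hny, hε]; gcongr; linarith [norm_nonneg A]
    have hxy : ‖x‖ + ‖y‖ = ε := by rw [hnx, hny, hε, ha]; ring
    -- S^n = exp (A + B)
    have hSpow : exp z ^ n = exp (A + B) := by
      letI : NormedAlgebra ℚ 𝔸 := NormedAlgebra.restrictScalars ℚ ℂ 𝔸
      rw [← exp_nsmul, hzdef, ← Nat.cast_smul_eq_nsmul ℂ, smul_smul,
        mul_inv_cancel₀ hnc, one_smul]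
    -- norms of exp
    have hexpx : ‖exp x‖ ≤ Real.exp ε :=
      (aux_norm_exp_le h1 x).trans (Real.exp_le_exp.2 hx)
    have hexpy : ‖exp y‖ ≤ Real.exp ε :=
      (aux_norm_exp_le h1 y).trans (Real.exp_le_exp.2 hy)
    have hexpz : ‖exp z‖ ≤ Real.exp ε :=
      (aux_norm_exp_le h1 z).trans (Real.exp_le_exp.2 hnz)
    have hexpεE : Real.exp ε ≤ E := Real.exp_le_exp.2 hεa
    have hT : ‖exp x * exp y‖ ≤ Real.exp ε := by
      refine (norm_mul_le _ _).trans ?_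
      calc ‖exp x‖ * ‖exp y‖
          ≤ Real.exp ‖x‖ * Real.exp ‖y‖ := by
            gcongr <;> [exact aux_norm_exp_le h1 x; exact aux_norm_exp_le h1 y]
        _ = Real.exp (‖x‖ + ‖y‖) := (Real.exp_add _ _).symm
        _ = Real.exp ε := by rw [hxy]
    -- remainder bounds
    have hRx : ‖exp x - 1 - x‖ ≤ ε ^ 2 * E := by
      refine (aux_quad h1 x).trans ?_
      gcongr
      exact Real.exp_le_exp.2 (hx.trans hεa)
    have hRy : ‖exp y - 1 - y‖ ≤ ε ^ 2 * E := by
      refine (aux_quad h1 y).trans ?_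
      gcongr
      exact Real.exp_le_exp.2 (hy.trans hεa)
    have hRz : ‖exp z - 1 - z‖ ≤ ε ^ 2 * E := by
      refine (aux_quad h1 z).trans ?_
      gcongr
      exact Real.exp_le_exp.2 (hnz.trans hεa)
    -- key algebraic identity
    have hzxy : z = x + y := by rw [hzdef, smul_add]
    have hid : exp x * exp y - exp z =
        x * y + x * (exp y - 1 - y) + (exp x - 1 - x) * exp y +
          (exp y - 1 - y) - (exp z - 1 - z) := by
      rw [hzxy]; noncomm_ring
    have hTS : ‖exp x * exp y - exp z‖ ≤ ε ^ 2 * C := by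
      rw [hid]
      have t1 : ‖x * y‖ ≤ ε * ε := (norm_mul_le _ _).trans (by gcongr)
      have t2 : ‖x * (exp y - 1 - y)‖ ≤ ε * (ε ^ 2 * E) :=
        (norm_mul_le _ _).trans (mul_le_mul hx hRy (norm_nonneg _) hε0)
      have t3 : ‖(exp x - 1 - x) * exp y‖ ≤ (ε ^ 2 * E) * E :=
        (norm_mul_le _ _).trans
          (mul_le_mul hRx (hexpy.trans hexpεE) (norm_nonneg _) (by positivity))
      calc ‖x * y + x * (exp y - 1 - y) + (exp x - 1 - x) * exp y +
            (exp y - 1 - y) - (exp z - 1 - z)‖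
          ≤ ‖x * y‖ + ‖x * (exp y - 1 - y)‖ + ‖(exp x - 1 - x) * exp y‖ +
            ‖exp y - 1 - y‖ + ‖exp z - 1 - z‖ := by
            refine (norm_sub_le _ _).trans ?_
            gcongr
            exact (norm_add_le _ _).trans (by gcongr; exact (norm_add_le _ _).trans (by gcongr; exact norm_add_le _ _))
        _ ≤ ε * ε + ε * (ε ^ 2 * E) + (ε ^ 2 * E) * E + ε ^ 2 * E + ε ^ 2 * E := by
            gcongr
        _ ≤ ε ^ 2 * C := by
            rw [hC]
            nlinarith [mul_le_mul_of_nonneg_right hεa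
              (mul_nonneg (sq_nonneg ε) hE0.le)]
    -- telescoping
    have htel := aux_pow_sub_pow h1 (exp x * exp y) (exp z)
      (Real.exp_nonneg ε) hT hexpz n
    have hMpow : Real.exp ε ^ (n - 1) ≤ E := by
      rw [← Real.exp_nat_mul]
      refine Real.exp_le_exp.2 ?_
      have h1n : ((n - 1 : ℕ) : ℝ) ≤ n := by
        exact_mod_cast Nat.sub_le n 1
      calc ((n - 1 : ℕ) : ℝ) * ε ≤ n * ε := by gcongr
        _ = a := by rw [hε]; field_simp
    rw [← hSpow]
    refine htel.trans ?_
    calc (n : ℝ) * Real.exp ε ^ (n - 1) * ‖exp x * exp y - exp z‖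
        ≤ n * E * (ε ^ 2 * C) := by
          gcongr
      _ = K / n := by
          rw [hK, hε]
          field_simp
  -- conclude by squeeze
  rw [← tendsto_sub_nhds_zero_iff]
  refine squeeze_zero_norm' ?_ (tendsto_const_div_atTop_nhds_zero_nat K)
  filter_upwards [eventually_ge_atTop 1] with n hn
  exact key n hn

end Aux


/-- Lie–Trotter product formula: `(exp(A/n) exp(B/n))^n → exp(A + B)` as `n → ∞`; in
particular for `H = H₁ + H₂`,
`(exp(-itH₁/(2n)) exp(-itH₂/(2n)))^n → exp(-it(H₁+H₂)/2)`. -/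
theorem lie_trotter (N : ℕ) :
    (∀ A B : Matrix (Fin N) (Fin N) ℂ,
      Tendsto (fun n : ℕ => (exp ((n : ℂ)⁻¹ • A) * exp ((n : ℂ)⁻¹ • B)) ^ n)
        atTop (nhds (exp (A + B)))) ∧
    (∀ (H₁ H₂ : Matrix (Fin N) (Fin N) ℂ) (t : ℝ),
      Tendsto (fun n : ℕ =>
          (exp (((-Complex.I * t) / (2 * n)) • H₁) *
            exp (((-Complex.I * t) / (2 * n)) • H₂)) ^ n)
        atTop (nhds (exp (((-Complex.I * t) / 2) • (H₁ + H₂))))) := by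
  have h1 : ‖(1 : Matrix (Fin N) (Fin N) ℂ)‖ ≤ 1 := by
    rcases Nat.eq_zero_or_pos N with h | h
    · subst h
      rw [Subsingleton.elim (1 : Matrix (Fin 0) (Fin 0) ℂ) 0, norm_zero]
      norm_num
    · haveI : Nonempty (Fin N) := ⟨⟨0, h⟩⟩
      exact le_of_eq norm_one
  have main := trotter_gen h1
  refine ⟨main, fun H₁ H₂ t => ?_⟩
  have hscal : ∀ (n : ℕ) (H : Matrix (Fin N) (Fin N) ℂ),
      ((-Complex.I * t) / (2 * n)) • H = (n : ℂ)⁻¹ • (((-Complex.I * t) / 2) • H) := by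
    intro n H
    rw [smul_smul, ← div_div, div_eq_inv_mul]
  have := main (((-Complex.I * t) / 2) • H₁) (((-Complex.I * t) / 2) • H₂)
  rw [← smul_add] at this
  simp only [← hscal] at this
  exact this
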